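/- Let ā₁₁, ā₁₂, ā₂₁, ā₂₂ be real numbers with ā₁₂ ≠ 0, set d := ā₁₁ā₂₂ − ā₁₂ā₂₁, and let λ ∈ ℂ with λ ≠ 0. Suppose u₁ : ℝ → ℂ is six times differentiable and u₂ : ℝ → ℂ is twice differentiable, and that they satisfy the system λu₁ + ā₁₁u₁⁽⁴⁾ − ā₁₂u₂″ = 0 and λu₂ + ā₂₁u₁⁽⁴⁾ − ā₂₂u₂″ = 0 on ℝ. Then u₂ = (1/ā₁₂)·((d/λ)u₁⁽⁴⁾ + ā₂₂u₁), and u₁ satisfies the sixth-order ordinary differential equation d·u₁⁽⁶⁾ − λā₁₁u₁⁽⁴⁾ + λā₂₂u₁″ − λ²u₁ = 0. -/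

import Mathlib

/-- Second iterated derivative of a linear combination `c1 • u⁽⁴⁾ + c2 • u`. -/
lemma aux_deriv2 (u1 : ℝ → ℂ) (hu1 : ∀ k < 6, Differentiable ℝ (iteratedDeriv k u1))
    (c1 c2 : ℂ) (t : ℝ) :
    iteratedDeriv 2 (fun s => c1 * iteratedDeriv 4 u1 s + c2 * u1 s) t
      = c1 * iteratedDeriv 6 u1 t + c2 * iteratedDeriv 2 u1 t := by
  have d0 : Differentiable ℝ u1 := by simpa using hu1 0 (by norm_num)
  have d1 : Differentiable ℝ (iteratedDeriv 1 u1) := hu1 1 (by norm_num)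
  have d4 : Differentiable ℝ (iteratedDeriv 4 u1) := hu1 4 (by norm_num)
  have d5 : Differentiable ℝ (iteratedDeriv 5 u1) := hu1 5 (by norm_num)
  have h5 : iteratedDeriv 5 u1 = deriv (iteratedDeriv 4 u1) := iteratedDeriv_succ
  have h6 : iteratedDeriv 6 u1 = deriv (iteratedDeriv 5 u1) := iteratedDeriv_succ
  have h1 : iteratedDeriv 1 u1 = deriv u1 := iteratedDeriv_one
  have h2 : iteratedDeriv 2 u1 = deriv (iteratedDeriv 1 u1) := iteratedDeriv_succ
  have step1 : deriv (fun s => c1 * iteratedDeriv 4 u1 s + c2 * u1 s)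
      = fun s => c1 * iteratedDeriv 5 u1 s + c2 * iteratedDeriv 1 u1 s := by
    funext s
    rw [deriv_fun_add ((d4 s).const_mul c1) ((d0 s).const_mul c2),
      deriv_const_mul _ (d4 s), deriv_const_mul _ (d0 s), h5, h1]
  rw [show (2 : ℕ) = 1 + 1 from rfl, iteratedDeriv_succ, iteratedDeriv_one, step1]
  rw [deriv_fun_add ((d5 t).const_mul c1) ((d1 t).const_mul c2),
    deriv_const_mul _ (d5 t), deriv_const_mul _ (d1 t), h6, h2]

/-- Reduction of the frozen-coefficient Lopatinskij–Shapiro system to a single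
sixth-order ODE: if `λu₁ + ā₁₁u₁⁽⁴⁾ − ā₁₂u₂″ = 0` and
`λu₂ + ā₂₁u₁⁽⁴⁾ − ā₂₂u₂″ = 0` with `ā₁₂ ≠ 0`, `λ ≠ 0`, then
`u₂ = (1/ā₁₂)((d/λ)u₁⁽⁴⁾ + ā₂₂u₁)` with `d = ā₁₁ā₂₂ − ā₁₂ā₂₁`, and `u₁` solves
`d·u₁⁽⁶⁾ − λā₁₁u₁⁽⁴⁾ + λā₂₂u₁″ − λ²u₁ = 0`. -/
theorem stmt_4 (a11 a12 a21 a22 : ℝ) (h12 : a12 ≠ 0) (lam : ℂ) (hlam : lam ≠ 0)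
    (u1 u2 : ℝ → ℂ)
    (hu1 : ∀ k < 6, Differentiable ℝ (iteratedDeriv k u1))
    (hu2 : ∀ k < 2, Differentiable ℝ (iteratedDeriv k u2))
    (heq1 : ∀ t : ℝ, lam * u1 t + (a11 : ℂ) * iteratedDeriv 4 u1 t
        - (a12 : ℂ) * iteratedDeriv 2 u2 t = 0)
    (heq2 : ∀ t : ℝ, lam * u2 t + (a21 : ℂ) * iteratedDeriv 4 u1 t
        - (a22 : ℂ) * iteratedDeriv 2 u2 t = 0) :
    (∀ t : ℝ, u2 t = (1 / (a12 : ℂ)) *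
        ((((a11 * a22 - a12 * a21 : ℝ) : ℂ) / lam) * iteratedDeriv 4 u1 t
          + (a22 : ℂ) * u1 t)) ∧
    (∀ t : ℝ, ((a11 * a22 - a12 * a21 : ℝ) : ℂ) * iteratedDeriv 6 u1 t
        - lam * (a11 : ℂ) * iteratedDeriv 4 u1 t
        + lam * (a22 : ℂ) * iteratedDeriv 2 u1 t - lam ^ 2 * u1 t = 0) := by
  have h12' : (a12 : ℂ) ≠ 0 := by exact_mod_cast Complex.ofReal_ne_zero.mpr h12
  have part1 : ∀ t : ℝ, u2 t = (1 / (a12 : ℂ)) *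
      ((((a11 * a22 - a12 * a21 : ℝ) : ℂ) / lam) * iteratedDeriv 4 u1 t
        + (a22 : ℂ) * u1 t) := by
    intro t
    have e1 := heq1 t
    have e2 := heq2 t
    field_simp
    push_cast
    linear_combination (a12 : ℂ) * e2 - (a22 : ℂ) * e1
  refine ⟨part1, ?_⟩
  intro t
  set c1 : ℂ := (1 / (a12 : ℂ)) * (((a11 * a22 - a12 * a21 : ℝ) : ℂ) / lam) with hc1
  set c2 : ℂ := (1 / (a12 : ℂ)) * (a22 : ℂ) with hc2
  have hu2eq : u2 = fun s => c1 * iteratedDeriv 4 u1 s + c2 * u1 s := by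
    funext s
    rw [part1 s, hc1, hc2]; ring
  have key : iteratedDeriv 2 u2 t
      = c1 * iteratedDeriv 6 u1 t + c2 * iteratedDeriv 2 u1 t := by
    rw [hu2eq]; exact aux_deriv2 u1 hu1 c1 c2 t
  have e1 := heq1 t
  rw [key] at e1
  rw [hc1, hc2] at e1
  field_simp at e1
  push_cast at e1 ⊢
  have hX : ((a12 : ℂ))^2 * ((a11 * a22 - a12 * a21 : ℂ) * iteratedDeriv 6 u1 t
      - lam * (a11 : ℂ) * iteratedDeriv 4 u1 t
      + lam * (a22 : ℂ) * iteratedDeriv 2 u1 t - lam ^ 2 * u1 t) = 0 := by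
    linear_combination -((a12 : ℂ))^2 * e1
  have := mul_eq_zero.mp hX
  exact this.resolve_left (pow_ne_zero 2 h12')
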